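/- Let H be a linear n-uniform hypergraph with n edges. If H is weakly dense, i.e., for every integer k with 2 ≤ k < √n there are at most k² vertices of degree k, then H admits a proper n-coloring, and its chromatic number is exactly n. -/

import Mathlib

open scoped Classical

/-- A finite hypergraph is given by its finite set of edges, each a finite set of vertices.
`Linear E` means any two distinct edges share at most one vertex. -/
def HG.Linear {V : Type*} (E : Finset (Finset V)) : Prop :=
  ∀ e₁ ∈ E, ∀ e₂ ∈ E, e₁ ≠ e₂ → (e₁ ∩ e₂).card ≤ 1

/-- The degree of a vertex: the number of edges containing it. -/
noncomputable def HG.deg {V : Type*} (E : Finset (Finset V)) (v : V) : ℕ :=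
  (E.filter (fun e => v ∈ e)).card

/-- The vertex set of the hypergraph: the union of its edges. -/
noncomputable def HG.verts {V : Type*} (E : Finset (Finset V)) : Finset V := E.sup id

/-- The adjacency of a vertex `v`: vertices distinct from `v` sharing an edge with `v`. -/
noncomputable def HG.adj {V : Type*} (E : Finset (Finset V)) (v : V) : Finset V :=
  (HG.verts E).filter (fun u => u ≠ v ∧ ∃ e ∈ E, v ∈ e ∧ u ∈ e)

/-- A proper coloring: vertices lying in a common edge receive distinct colors. -/
def HG.Proper {V : Type*} {m : ℕ} (E : Finset (Finset V)) (f : V → Fin m) : Prop :=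
  ∀ e ∈ E, ∀ u ∈ e, ∀ w ∈ e, u ≠ w → f u ≠ f w




namespace EFL

noncomputable def pickColor {n : ℕ} (hn : 0 < n) (s : Finset (Fin n)) : Fin n :=
  if h : (Finset.univ \ s).Nonempty then h.choose else ⟨0, hn⟩

lemma pickColor_not_mem {n : ℕ} (hn : 0 < n) {s : Finset (Fin n)} (hs : s.card < n) :
    pickColor hn s ∉ s := by
  have h : (Finset.univ \ s).Nonempty := by
    rw [← Finset.card_pos, Finset.card_sdiff_of_subset (Finset.subset_univ s)]
    have h2 : (Finset.univ : Finset (Fin n)).card = n := by simp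
    omega
  rw [pickColor, dif_pos h]
  have := h.choose_spec
  rw [Finset.mem_sdiff] at this
  exact this.2

noncomputable def greedy {V : Type*} [DecidableEq V] (n : ℕ) (hn : 0 < n) (C : Finset V)
    (Adj : V → V → Prop) (ρ : V → ℕ) : ℕ → Fin n
  | m =>
    pickColor hn
      (((C.filter (fun u => ρ u < m ∧ ∃ w ∈ C, ρ w = m ∧ Adj w u)).attach).image
        (fun u => greedy n hn C Adj ρ (ρ u.1)))
  termination_by m => m
  decreasing_by
    exact (Finset.mem_filter.mp u.2).2.1

lemma greedy_ne {V : Type*} [DecidableEq V] (n : ℕ) (hn : 0 < n) (C : Finset V)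
    (Adj : V → V → Prop) (ρ : V → ℕ)
    (hsym : ∀ u w, Adj u w → Adj w u)
    (hinj : ∀ u ∈ C, ∀ w ∈ C, ρ u = ρ w → u = w)
    (hbound : ∀ w ∈ C, (C.filter (fun u => ρ u < ρ w ∧ Adj w u)).card < n) :
    ∀ u ∈ C, ∀ w ∈ C, Adj u w → u ≠ w →
      greedy n hn C Adj ρ (ρ u) ≠ greedy n hn C Adj ρ (ρ w) := by
  have key : ∀ u ∈ C, ∀ w ∈ C, Adj w u → ρ u < ρ w →
      greedy n hn C Adj ρ (ρ w) ≠ greedy n hn C Adj ρ (ρ u) := by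
    intro u hu w hw hadj hlt
    have hTeq : C.filter (fun x => ρ x < ρ w ∧ ∃ w' ∈ C, ρ w' = ρ w ∧ Adj w' x)
        = C.filter (fun x => ρ x < ρ w ∧ Adj w x) := by
      apply Finset.filter_congr
      intro x hx
      constructor
      · rintro ⟨h1, w', hw', hρ, hA⟩
        exact ⟨h1, by rwa [hinj w' hw' w hw hρ] at hA⟩
      · rintro ⟨h1, hA⟩
        exact ⟨h1, w, hw, rfl, hA⟩
    rw [greedy]
    intro hcontra
    apply pickColor_not_mem hn (s := (((C.filter (fun x => ρ x < ρ w ∧ ∃ w' ∈ C, ρ w' = ρ w ∧ Adj w' x)).attach).image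
        (fun x => greedy n hn C Adj ρ (ρ x.1))))
    · calc _ ≤ (C.filter (fun x => ρ x < ρ w ∧ ∃ w' ∈ C, ρ w' = ρ w ∧ Adj w' x)).attach.card :=
          Finset.card_image_le
        _ = (C.filter (fun x => ρ x < ρ w ∧ ∃ w' ∈ C, ρ w' = ρ w ∧ Adj w' x)).card := Finset.card_attach
        _ < n := by rw [hTeq]; exact hbound w hw
    · rw [hcontra]
      have hmem : u ∈ C.filter (fun x => ρ x < ρ w ∧ ∃ w' ∈ C, ρ w' = ρ w ∧ Adj w' x) := by
        rw [hTeq, Finset.mem_filter]; exact ⟨hu, hlt, hadj⟩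
      exact Finset.mem_image.mpr ⟨⟨u, hmem⟩, Finset.mem_attach _ _, rfl⟩
  intro u hu w hw hadj hne
  have hρ : ρ u ≠ ρ w := fun h => hne (hinj u hu w hw h)
  rcases lt_or_gt_of_ne hρ with h | h
  · exact (key u hu w hw (hsym u w hadj) h).symm
  · exact key w hw u hu hadj h

end EFL

namespace EFL

variable {V : Type*} {E : Finset (Finset V)} {n : ℕ}

lemma mem_verts {v : V} {e : Finset V} (he : e ∈ E) (hv : v ∈ e) : v ∈ HG.verts E := by
  rw [HG.verts, Finset.mem_sup]; exact ⟨e, he, hv⟩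

lemma deg_pos_iff {v : V} : 0 < HG.deg E v ↔ ∃ e ∈ E, v ∈ e := by
  rw [HG.deg, Finset.card_pos]
  constructor
  · rintro ⟨e, he⟩; rw [Finset.mem_filter] at he; exact ⟨e, he.1, he.2⟩
  · rintro ⟨e, he, hv⟩; exact ⟨e, Finset.mem_filter.mpr ⟨he, hv⟩⟩

lemma verts_mem_of_deg_pos {v : V} (h : 0 < HG.deg E v) : v ∈ HG.verts E := by
  obtain ⟨e, he, hv⟩ := deg_pos_iff.mp h; exact mem_verts he hv

lemma deg_le (hE : E.card = n) (v : V) : HG.deg E v ≤ n := by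
  rw [HG.deg, ← hE]; exact Finset.card_le_card (Finset.filter_subset _ _)

/-- two distinct vertices lie in at most one common edge -/
lemma common_unique (hlin : HG.Linear E) {u w : V} {e f : Finset V}
    (he : e ∈ E) (hf : f ∈ E) (hne : u ≠ w)
    (hue : u ∈ e) (hwe : w ∈ e) (huf : u ∈ f) (hwf : w ∈ f) : e = f := by
  by_contra h
  have h1 := hlin e he f hf h
  have h2 : ({u, w} : Finset V) ⊆ e ∩ f := by
    intro x hx
    rcases Finset.mem_insert.mp hx with rfl | hx
    · exact Finset.mem_inter.mpr ⟨hue, huf⟩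
    · rw [Finset.mem_singleton] at hx; subst hx; exact Finset.mem_inter.mpr ⟨hwe, hwf⟩
  have h3 : ({u, w} : Finset V).card = 2 := by
    rw [Finset.card_insert_of_notMem (by simpa using hne), Finset.card_singleton]
  have := Finset.card_le_card h2
  omega

lemma mem_adj_iff {u v : V} :
    u ∈ HG.adj E v ↔ (u ≠ v ∧ ∃ e ∈ E, v ∈ e ∧ u ∈ e) := by
  rw [HG.adj, Finset.mem_filter]
  constructor
  · rintro ⟨_, h⟩; exact h
  · rintro ⟨hne, e, he, hv, hu⟩; exact ⟨mem_verts he hu, hne, e, he, hv, hu⟩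

/-- the set of common edges of adjacent vertices is a singleton -/
lemma common_card_one (hlin : HG.Linear E) {u v : V} (h : u ∈ HG.adj E v) :
    (E.filter (fun f => v ∈ f ∧ u ∈ f)).card = 1 := by
  obtain ⟨hne, e, he, hv, hu⟩ := mem_adj_iff.mp h
  rw [Finset.card_eq_one]
  refine ⟨e, Finset.eq_singleton_iff_unique_mem.mpr ⟨Finset.mem_filter.mpr ⟨he, hv, hu⟩, ?_⟩⟩
  intro f hf
  rw [Finset.mem_filter] at hf
  exact (common_unique hlin hf.1 he hne hf.2.2 hf.2.1 hu hv)

lemma count_away (hlin : HG.Linear E) {u v : V} (h : u ∈ HG.adj E v) :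
    (E.filter (fun f => u ∈ f ∧ v ∉ f)).card = HG.deg E u - 1 := by
  have h1 : (E.filter (fun f => u ∈ f ∧ v ∈ f)).card = 1 := by
    have heq : E.filter (fun f => u ∈ f ∧ v ∈ f) = E.filter (fun f => v ∈ f ∧ u ∈ f) :=
      Finset.filter_congr (fun f _ => and_comm)
    rw [heq]
    exact common_card_one hlin h
  have h2 : (E.filter (fun f => u ∈ f ∧ v ∈ f)).card
      + (E.filter (fun f => u ∈ f ∧ v ∉ f)).card = HG.deg E u := by
    rw [HG.deg, ← Finset.filter_filter, ← Finset.filter_filter]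
    exact Finset.card_filter_add_card_filter_not (fun f => v ∈ f)
  omega

end EFL


namespace EFL
variable {V : Type*} {E : Finset (Finset V)} {n : ℕ}

/-- choice of a common edge -/
noncomputable def cedge (E : Finset (Finset V)) (v : V) : V → Finset V := fun u =>
  if h : ∃ e ∈ E, v ∈ e ∧ u ∈ e then h.choose else ∅

lemma cedge_spec {v u : V} (h : ∃ e ∈ E, v ∈ e ∧ u ∈ e) :
    cedge E v u ∈ E ∧ v ∈ cedge E v u ∧ u ∈ cedge E v u := by
  rw [cedge, dif_pos h]
  exact ⟨h.choose_spec.1, h.choose_spec.2⟩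

/-- The key budget lemma: neighbours of `v` carry total "away-degree" at most
`deg v * (n - deg v)`. -/
lemma budget (hlin : HG.Linear E) (hE : E.card = n) (v : V) (W : Finset V)
    (hW : W ⊆ HG.adj E v) :
    ∑ u ∈ W, (HG.deg E u - 1) ≤ HG.deg E v * (n - HG.deg E v) := by
  have step1 : ∀ u ∈ W, HG.deg E u - 1 = (E.filter (fun f => u ∈ f ∧ v ∉ f)).card :=
    fun u hu => (count_away hlin (hW hu)).symm
  rw [Finset.sum_congr rfl step1]
  have step2 : ∀ u ∈ W, (E.filter (fun f => u ∈ f ∧ v ∉ f)).card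
      = ∑ f ∈ E, if (u ∈ f ∧ v ∉ f) then 1 else 0 := fun u _ => Finset.card_filter _ _
  rw [Finset.sum_congr rfl step2, Finset.sum_comm]
  have step3 : ∀ f ∈ E, (∑ u ∈ W, if (u ∈ f ∧ v ∉ f) then 1 else 0)
      ≤ if v ∈ f then 0 else HG.deg E v := by
    intro f hf
    by_cases hvf : v ∈ f
    · simp [hvf]
    · rw [if_neg hvf]
      have hsum : (∑ u ∈ W, if (u ∈ f ∧ v ∉ f) then 1 else 0)
          = (W.filter (fun u => u ∈ f)).card := by
        rw [Finset.card_filter]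
        exact Finset.sum_congr rfl (fun u _ => by by_cases h : u ∈ f <;> simp [h, hvf])
      rw [hsum, HG.deg]
      apply Finset.card_le_card_of_injOn (cedge E v)
      · intro u hu
        rw [Finset.mem_coe, Finset.mem_filter] at hu
        obtain ⟨hne, e, he, hv, hue⟩ := mem_adj_iff.mp (hW hu.1)
        have s1 := cedge_spec (E := E) (v := v) (u := u) ⟨e, he, hv, hue⟩
        exact Finset.mem_coe.mpr (Finset.mem_filter.mpr ⟨s1.1, s1.2.1⟩)
      · intro u hu u' hu' heq
        simp only [Finset.coe_filter, Set.mem_setOf_eq] at hu hu'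
        obtain ⟨hne, e, he, hv, hue⟩ := mem_adj_iff.mp (hW hu.1)
        obtain ⟨hne', e', he', hv', hue'⟩ := mem_adj_iff.mp (hW hu'.1)
        have s1 := cedge_spec (E := E) (v := v) (u := u) ⟨e, he, hv, hue⟩
        have s2 := cedge_spec (E := E) (v := v) (u := u') ⟨e', he', hv', hue'⟩
        rw [heq] at s1
        have hcf : cedge E v u' ≠ f := fun h => hvf (h ▸ s2.2.1)
        have hcard := hlin (cedge E v u') s2.1 f hf hcf
        have hu1 : u ∈ cedge E v u' ∩ f := Finset.mem_inter.mpr ⟨s1.2.2, hu.2⟩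
        have hu2 : u' ∈ cedge E v u' ∩ f := Finset.mem_inter.mpr ⟨s2.2.2, hu'.2⟩
        exact Finset.card_le_one.mp hcard u hu1 u' hu2
  calc (∑ f ∈ E, ∑ u ∈ W, if (u ∈ f ∧ v ∉ f) then 1 else 0)
      ≤ ∑ f ∈ E, if v ∈ f then 0 else HG.deg E v := Finset.sum_le_sum step3
    _ = ∑ f ∈ E.filter (fun f => ¬ v ∈ f), HG.deg E v := by
        rw [Finset.sum_filter]
        exact Finset.sum_congr rfl (fun f _ => by by_cases h : v ∈ f <;> simp [h])
    _ = (E.filter (fun f => ¬ v ∈ f)).card * HG.deg E v := by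
        rw [Finset.sum_const, smul_eq_mul]
    _ = (n - HG.deg E v) * HG.deg E v := by
        have h1 : E.filter (fun f => ¬ v ∈ f) = E \ E.filter (fun f => v ∈ f) :=
          Finset.filter_not _ _
        rw [h1, Finset.card_sdiff_of_subset (Finset.filter_subset _ _), hE]
        rfl
    _ = HG.deg E v * (n - HG.deg E v) := mul_comm _ _

/-- per-edge budget: the core vertices of an edge have total other-degree at most `n-1`. -/
lemma edge_budget (hlin : HG.Linear E) (hE : E.card = n) {e : Finset V} (he : e ∈ E)
    (S : Finset V) (hS : S ⊆ e) :
    ∑ u ∈ S, (HG.deg E u - 1) ≤ n - 1 := by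
  have step1 : ∀ u ∈ S, HG.deg E u - 1 = (E.filter (fun f => u ∈ f ∧ f ≠ e)).card := by
    intro u hu
    have h1 : (E.filter (fun f => u ∈ f ∧ f = e)).card = 1 := by
      rw [Finset.card_eq_one]
      refine ⟨e, Finset.eq_singleton_iff_unique_mem.mpr
        ⟨Finset.mem_filter.mpr ⟨he, hS hu, rfl⟩, ?_⟩⟩
      intro f hf
      exact (Finset.mem_filter.mp hf).2.2
    have h2 : (E.filter (fun f => u ∈ f ∧ f = e)).card
        + (E.filter (fun f => u ∈ f ∧ f ≠ e)).card = HG.deg E u := by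
      rw [HG.deg, ← Finset.filter_filter, ← Finset.filter_filter]
      exact Finset.card_filter_add_card_filter_not (fun f => f = e)
    omega
  rw [Finset.sum_congr rfl step1]
  have step2 : ∀ u ∈ S, (E.filter (fun f => u ∈ f ∧ f ≠ e)).card
      = ∑ f ∈ E, if (u ∈ f ∧ f ≠ e) then 1 else 0 := fun u _ => Finset.card_filter _ _
  rw [Finset.sum_congr rfl step2, Finset.sum_comm]
  have step3 : ∀ f ∈ E, (∑ u ∈ S, if (u ∈ f ∧ f ≠ e) then 1 else 0)
      ≤ if f = e then 0 else 1 := by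
    intro f hf
    by_cases hfe : f = e
    · simp [hfe]
    · rw [if_neg hfe]
      have hsum : (∑ u ∈ S, if (u ∈ f ∧ f ≠ e) then 1 else 0)
          = (S.filter (fun u => u ∈ f)).card := by
        rw [Finset.card_filter]
        exact Finset.sum_congr rfl (fun u _ => by by_cases h : u ∈ f <;> simp [h, hfe])
      rw [hsum]
      calc (S.filter (fun u => u ∈ f)).card ≤ (e ∩ f).card := by
            apply Finset.card_le_card
            intro x hx
            rw [Finset.mem_filter] at hx
            exact Finset.mem_inter.mpr ⟨hS hx.1, hx.2⟩
        _ ≤ 1 := hlin e he f hf (fun h => hfe h.symm)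
  calc (∑ f ∈ E, ∑ u ∈ S, if (u ∈ f ∧ f ≠ e) then 1 else 0)
      ≤ ∑ f ∈ E, if f = e then 0 else 1 := Finset.sum_le_sum step3
    _ = ∑ f ∈ E.filter (fun f => ¬ f = e), 1 := by
        rw [Finset.sum_filter]
        exact Finset.sum_congr rfl (fun f _ => by by_cases h : f = e <;> simp [h])
    _ = (E.filter (fun f => ¬ f = e)).card := by rw [Finset.sum_const, smul_eq_mul, mul_one]
    _ ≤ n - 1 := by
        have h1 : E.filter (fun f => ¬ f = e) = E \ E.filter (fun f => f = e) :=
          Finset.filter_not _ _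
        have h2 : E.filter (fun f => f = e) = {e} := by
          rw [Finset.filter_eq', if_pos he]
        rw [h1, Finset.card_sdiff_of_subset (Finset.filter_subset _ _), hE, h2, Finset.card_singleton]

end EFL


namespace EFL
variable {V : Type*} {E : Finset (Finset V)} {n : ℕ}

lemma tbound (hlin : HG.Linear E) (hE : E.card = n) {e : Finset V} (he : e ∈ E) (k : ℕ) :
    (e.filter (fun u => HG.deg E u = k)).card * (k - 1) ≤ n - 1 := by
  have h := edge_budget hlin hE he (e.filter (fun u => HG.deg E u = k))
    (Finset.filter_subset _ _)
  calc (e.filter (fun u => HG.deg E u = k)).card * (k - 1)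
      = ∑ u ∈ e.filter (fun u => HG.deg E u = k), (k - 1) := by
        rw [Finset.sum_const, smul_eq_mul]
    _ = ∑ u ∈ e.filter (fun u => HG.deg E u = k), (HG.deg E u - 1) := by
        apply Finset.sum_congr rfl
        intro u hu
        rw [(Finset.mem_filter.mp hu).2]
    _ ≤ n - 1 := h

/-- number of same-degree neighbours -/
noncomputable def aCnt (E : Finset (Finset V)) (v : V) : ℕ :=
  ((HG.adj E v).filter (fun u => HG.deg E u = HG.deg E v)).card

lemma aCnt_decomp (hlin : HG.Linear E) (v : V) :
    aCnt E v = ∑ e ∈ E.filter (fun e => v ∈ e),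
      ((e.filter (fun u => HG.deg E u = HG.deg E v)).card - 1) := by
  have hset : (HG.adj E v).filter (fun u => HG.deg E u = HG.deg E v)
      = (E.filter (fun e => v ∈ e)).biUnion
          (fun e => (e.filter (fun u => HG.deg E u = HG.deg E v)).erase v) := by
    ext u
    simp only [Finset.mem_biUnion, Finset.mem_filter, Finset.mem_erase]
    constructor
    · rintro ⟨hadj, hdeg⟩
      obtain ⟨hne, e, he, hv, hu⟩ := mem_adj_iff.mp hadj
      exact ⟨e, ⟨he, hv⟩, hne, hu, hdeg⟩
    · rintro ⟨e, ⟨he, hv⟩, hne, hu, hdeg⟩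
      exact ⟨mem_adj_iff.mpr ⟨hne, e, he, hv, hu⟩, hdeg⟩
  rw [aCnt, hset, Finset.card_biUnion]
  · apply Finset.sum_congr rfl
    intro e he
    rw [Finset.mem_filter] at he
    exact Finset.card_erase_of_mem
      (show v ∈ e.filter (fun u => HG.deg E u = HG.deg E v) from
        Finset.mem_filter.mpr ⟨he.2, rfl⟩)
  · intro e he f hf hne
    rw [Finset.mem_coe, Finset.mem_filter] at he hf
    simp only [Function.onFun, Finset.disjoint_left]
    intro x hx hx'
    rw [Finset.mem_erase, Finset.mem_filter] at hx hx'
    exact hne (common_unique hlin he.1 hf.1 hx.1 hx.2.1 he.2 hx'.2.1 hf.2)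

/-- saturated vertex: degree k with k² = n and a full fan of same-degree neighbours -/
def Satur (n : ℕ) (E : Finset (Finset V)) (v : V) : Prop :=
  2 ≤ HG.deg E v ∧ HG.deg E v * HG.deg E v = n ∧ aCnt E v = n

lemma sat_struct_aux (hlin : HG.Linear E) (hE : E.card = n) {v : V} {k : ℕ}
    (hdeg : HG.deg E v = k) (hk2 : 2 ≤ k) (hkk : k * k = n) (hsatn : aCnt E v = n)
    {e : Finset V} (he : e ∈ E) (hv : v ∈ e) :
    (e.filter (fun u => HG.deg E u = k)).card = k + 1 ∧
      (∀ u ∈ e, 2 ≤ HG.deg E u → HG.deg E u = k) := by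
  obtain ⟨j, rfl⟩ : ∃ j, k = j + 2 := ⟨k - 2, by omega⟩
  have hEv : (E.filter (fun e => v ∈ e)).card = j + 2 := hdeg
  have hub : ∀ f ∈ E.filter (fun e => v ∈ e),
      (f.filter (fun u => HG.deg E u = j + 2)).card - 1 ≤ j + 2 := by
    intro f hf
    have h := tbound hlin hE (Finset.mem_filter.mp hf).1 (j + 2)
    by_contra hcon
    push_neg at hcon
    have h2 : (j + 4) * (j + 1) ≤ (f.filter (fun u => HG.deg E u = j + 2)).card * (j + 2 - 1) :=
      Nat.mul_le_mul (by omega) (by omega)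
    have h3 : (j+4) * (j+1) ≤ n - 1 := le_trans h2 h
    have e1 : (j+4)*(j+1) = j*j + 5*j + 4 := by ring
    have e2 : (j+2)*(j+2) = j*j + 4*j + 4 := by ring
    omega
  have hall : ∀ f ∈ E.filter (fun e => v ∈ e),
      (f.filter (fun u => HG.deg E u = j + 2)).card - 1 = j + 2 := by
    intro f hf
    by_contra hcon
    have hlt : (f.filter (fun u => HG.deg E u = j+2)).card - 1 ≤ j + 1 := by
      have := hub f hf; omega
    have hsum := aCnt_decomp hlin v
    simp only [hdeg] at hsum
    rw [hsatn] at hsum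
    have hsplit : ∑ e ∈ E.filter (fun e => v ∈ e),
        ((e.filter (fun u => HG.deg E u = j+2)).card - 1)
        = ((f.filter (fun u => HG.deg E u = j+2)).card - 1)
          + ∑ e ∈ (E.filter (fun e => v ∈ e)).erase f,
            ((e.filter (fun u => HG.deg E u = j+2)).card - 1) :=
      (Finset.add_sum_erase _ _ hf).symm
    have hrest : ∑ e ∈ (E.filter (fun e => v ∈ e)).erase f,
        ((e.filter (fun u => HG.deg E u = j+2)).card - 1) ≤ (j+1) * (j+2) := by
      have hcard : ((E.filter (fun e => v ∈ e)).erase f).card = j + 1 := by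
        rw [Finset.card_erase_of_mem hf, hEv]; omega
      calc _ ≤ ∑ e ∈ (E.filter (fun e => v ∈ e)).erase f, (j+2) :=
            Finset.sum_le_sum (fun e heM => hub e (Finset.mem_of_mem_erase heM))
        _ = (j+1) * (j+2) := by rw [Finset.sum_const, smul_eq_mul, hcard]
    have e1 : (j+1)*(j+2) = j*j + 3*j + 2 := by ring
    have e2 : (j+2)*(j+2) = j*j + 4*j + 4 := by ring
    omega
  have hfe : e ∈ E.filter (fun e => v ∈ e) := Finset.mem_filter.mpr ⟨he, hv⟩
  have hcard1 : (e.filter (fun u => HG.deg E u = j+2)).card = j + 3 := by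
    have h := hall e hfe
    have hpos : 0 < (e.filter (fun u => HG.deg E u = j+2)).card :=
      Finset.card_pos.mpr ⟨v, Finset.mem_filter.mpr ⟨hv, hdeg⟩⟩
    omega
  refine ⟨by omega, ?_⟩
  intro u' hu' hdu'
  by_contra hne
  have hnotmem : u' ∉ e.filter (fun u => HG.deg E u = j+2) := by
    rw [Finset.mem_filter]; tauto
  have hsub : insert u' (e.filter (fun u => HG.deg E u = j+2)) ⊆ e := by
    intro x hx
    rcases Finset.mem_insert.mp hx with rfl | hx
    · exact hu'
    · exact Finset.filter_subset _ _ hx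
  have hbig := edge_budget hlin hE he _ hsub
  rw [Finset.sum_insert hnotmem] at hbig
  have heq : ∑ u ∈ e.filter (fun u => HG.deg E u = j+2), (HG.deg E u - 1)
      = (j+3) * (j+1) := by
    calc ∑ u ∈ e.filter (fun u => HG.deg E u = j+2), (HG.deg E u - 1)
        = ∑ u ∈ e.filter (fun u => HG.deg E u = j+2), (j + 1) := by
          apply Finset.sum_congr rfl
          intro u hu
          rw [(Finset.mem_filter.mp hu).2]; omega
      _ = (j+3) * (j+1) := by rw [Finset.sum_const, smul_eq_mul, hcard1]
  have e1 : (j+3)*(j+1) = j*j + 4*j + 3 := by ring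
  have e2 : (j+2)*(j+2) = j*j + 4*j + 4 := by ring
  omega

lemma sat_struct (hlin : HG.Linear E) (hE : E.card = n) {v : V} (hsat : Satur n E v)
    {e : Finset V} (he : e ∈ E) (hv : v ∈ e) :
    (e.filter (fun u => HG.deg E u = HG.deg E v)).card = HG.deg E v + 1 ∧
      (∀ u ∈ e, 2 ≤ HG.deg E u → HG.deg E u = HG.deg E v) :=
  sat_struct_aux hlin hE rfl hsat.1 hsat.2.1 hsat.2.2 he hv

/-- all core neighbours of a saturated vertex have the same degree -/
lemma sat_nbr_eq (hlin : HG.Linear E) (hE : E.card = n) {v : V} (hsat : Satur n E v) :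
    (HG.adj E v).filter (fun u => 2 ≤ HG.deg E u)
      = (HG.adj E v).filter (fun u => HG.deg E u = HG.deg E v) := by
  apply Finset.filter_congr
  intro u hu
  constructor
  · intro h2
    obtain ⟨hne, e, he, hv, hue⟩ := mem_adj_iff.mp hu
    exact (sat_struct hlin hE hsat he hv).2 u hue h2
  · intro h
    rw [h]; exact hsat.1

lemma sat_nbr_card (hlin : HG.Linear E) (hE : E.card = n) {v : V} (hsat : Satur n E v) :
    ((HG.adj E v).filter (fun u => 2 ≤ HG.deg E u)).card = n := by
  rw [sat_nbr_eq hlin hE hsat]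
  exact hsat.2.2

end EFL


namespace EFL
variable {V : Type*} {E : Finset (Finset V)} {n : ℕ}

lemma term_ub (hlin : HG.Linear E) (hE : E.card = n) {k : ℕ} (hk2 : 2 ≤ k)
    (hkk : k * k = n) {e : Finset V} (he : e ∈ E) :
    (e.filter (fun u => HG.deg E u = k)).card - 1 ≤ k := by
  obtain ⟨j, rfl⟩ : ∃ j, k = j + 2 := ⟨k - 2, by omega⟩
  have h := tbound hlin hE he (j + 2)
  by_contra hcon
  push_neg at hcon
  have h2 : (j + 4) * (j + 1) ≤ (e.filter (fun u => HG.deg E u = j + 2)).card * (j + 2 - 1) :=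
    Nat.mul_le_mul (by omega) (by omega)
  have h3 : (j+4) * (j+1) ≤ n - 1 := le_trans h2 h
  have e1 : (j+4)*(j+1) = j*j + 5*j + 4 := by ring
  have e2 : (j+2)*(j+2) = j*j + 4*j + 4 := by ring
  omega

lemma aCnt_le (hlin : HG.Linear E) (hE : E.card = n) {v : V} {k : ℕ}
    (hdeg : HG.deg E v = k) (hk2 : 2 ≤ k) (hkk : k * k = n) :
    aCnt E v ≤ n := by
  rw [aCnt_decomp hlin v]
  simp only [hdeg]
  calc ∑ e ∈ E.filter (fun e => v ∈ e), ((e.filter (fun u => HG.deg E u = k)).card - 1)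
      ≤ ∑ e ∈ E.filter (fun e => v ∈ e), k :=
        Finset.sum_le_sum (fun e he =>
          term_ub hlin hE hk2 hkk (Finset.mem_filter.mp he).1)
    _ = k * k := by
        rw [Finset.sum_const, smul_eq_mul]
        congr 1
    _ = n := hkk

/-- Σ_{u ∈ Conf} deg v ≤ budget + #(same degree) -/
lemma mul_card_le (hE : E.card = n) (hlin : HG.Linear E) {v : V} {k : ℕ}
    (hdeg : HG.deg E v = k) (hk2 : 2 ≤ k) (Conf : Finset V)
    (hsub : Conf ⊆ (HG.adj E v).filter (fun u => k ≤ HG.deg E u)) :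
    k * Conf.card ≤ k * (n - k) + (Conf.filter (fun u => HG.deg E u = k)).card := by
  have hadj : Conf ⊆ HG.adj E v :=
    fun u hu => (Finset.mem_filter.mp (hsub hu)).1
  have hbud := budget hlin hE v Conf hadj
  rw [hdeg] at hbud
  have hsum : ∑ u ∈ Conf, k
      ≤ ∑ u ∈ Conf, ((HG.deg E u - 1) + if HG.deg E u = k then 1 else 0) := by
    apply Finset.sum_le_sum
    intro u hu
    have hge : k ≤ HG.deg E u := (Finset.mem_filter.mp (hsub hu)).2
    by_cases h : HG.deg E u = k
    · rw [if_pos h, h]; omega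
    · rw [if_neg h]; omega
  rw [Finset.sum_add_distrib, Finset.sum_const, smul_eq_mul, mul_comm] at hsum
  have hcf : (∑ u ∈ Conf, if HG.deg E u = k then 1 else 0)
      = (Conf.filter (fun u => HG.deg E u = k)).card := (Finset.card_filter _ _).symm
  rw [hcf] at hsum
  omega

/-- case k² > n -/
lemma conflict_lt_of_big (hlin : HG.Linear E) (hE : E.card = n) {v : V} {k : ℕ}
    (hdeg : HG.deg E v = k) (hk2 : 2 ≤ k) (hbig : n < k * k) (Conf : Finset V)
    (hsub : Conf ⊆ (HG.adj E v).filter (fun u => k ≤ HG.deg E u)) :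
    Conf.card < n := by
  have hadj : Conf ⊆ HG.adj E v := fun u hu => (Finset.mem_filter.mp (hsub hu)).1
  have hbud := budget hlin hE v Conf hadj
  rw [hdeg] at hbud
  have hterm : ∀ u ∈ Conf, k - 1 ≤ HG.deg E u - 1 := by
    intro u hu
    have := (Finset.mem_filter.mp (hsub hu)).2
    omega
  have hlow : Conf.card * (k - 1) ≤ ∑ u ∈ Conf, (HG.deg E u - 1) := by
    calc Conf.card * (k-1) = ∑ _u ∈ Conf, (k-1) := by rw [Finset.sum_const, smul_eq_mul]
      _ ≤ _ := Finset.sum_le_sum hterm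
  have hkn : k ≤ n := hdeg ▸ deg_le hE v
  by_contra hcon
  push_neg at hcon
  obtain ⟨j, rfl⟩ : ∃ j, k = j + 2 := ⟨k - 2, by omega⟩
  obtain ⟨d, rfl⟩ : ∃ d, n = (j + 2) + d := ⟨n - (j+2), by omega⟩
  have h1 : ((j+2) + d) * (j + 1) ≤ Conf.card * (j + 2 - 1) :=
    Nat.mul_le_mul hcon (by omega)
  have h2 : ((j+2)+d) * (j+1) ≤ (j+2) * d := by
    calc ((j+2)+d) * (j+1) ≤ Conf.card * (j+2-1) := h1
      _ ≤ ∑ u ∈ Conf, (HG.deg E u - 1) := hlow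
      _ ≤ (j+2) * ((j+2) + d - (j+2)) := hbud
      _ = (j+2) * d := by congr 1; omega
  nlinarith

/-- case k² < n, using weak density -/
lemma conflict_lt_of_small (hlin : HG.Linear E) (hE : E.card = n)
    (hwd' : ∀ k : ℕ, 2 ≤ k → k * k < n →
      ((HG.verts E).filter (fun v => HG.deg E v = k)).card ≤ k * k)
    {v : V} {k : ℕ}
    (hdeg : HG.deg E v = k) (hk2 : 2 ≤ k) (hsmall : k * k < n) (Conf : Finset V)
    (hsub : Conf ⊆ (HG.adj E v).filter (fun u => k ≤ HG.deg E u)) :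
    Conf.card < n := by
  have hmul := mul_card_le hE hlin hdeg hk2 Conf hsub
  have hvmem : v ∈ HG.verts E := verts_mem_of_deg_pos (by omega)
  have hvnot : v ∉ Conf.filter (fun u => HG.deg E u = k) := by
    intro h
    have := (Finset.mem_filter.mp (hsub (Finset.filter_subset _ _ h))).1
    exact (mem_adj_iff.mp this).1 rfl
  have hsubA : insert v (Conf.filter (fun u => HG.deg E u = k))
      ⊆ (HG.verts E).filter (fun u => HG.deg E u = k) := by
    intro x hx
    rcases Finset.mem_insert.mp hx with rfl | hx
    · exact Finset.mem_filter.mpr ⟨hvmem, hdeg⟩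
    · rw [Finset.mem_filter] at hx ⊢
      refine ⟨?_, hx.2⟩
      have := (Finset.mem_filter.mp (hsub hx.1)).1
      exact Finset.mem_of_mem_filter x this
  have hcard : (Conf.filter (fun u => HG.deg E u = k)).card + 1 ≤ k * k := by
    have h1 := Finset.card_le_card hsubA
    rw [Finset.card_insert_of_notMem hvnot] at h1
    exact le_trans h1 (hwd' k hk2 hsmall)
  have hkn : k ≤ n := hdeg ▸ deg_le hE v
  have hknk : k * (n - k) + k * k = k * n := by
    rw [← Nat.mul_add]
    congr 1
    omega
  have hfin : k * Conf.card < k * n := by omega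
  exact Nat.lt_of_mul_lt_mul_left hfin

/-- case k² = n but not saturated -/
lemma conflict_lt_of_unsat (hlin : HG.Linear E) (hE : E.card = n) {v : V} {k : ℕ}
    (hdeg : HG.deg E v = k) (hk2 : 2 ≤ k) (heq : k * k = n) (hnsat : ¬ Satur n E v)
    (Conf : Finset V)
    (hsub : Conf ⊆ (HG.adj E v).filter (fun u => k ≤ HG.deg E u)) :
    Conf.card < n := by
  have hmul := mul_card_le hE hlin hdeg hk2 Conf hsub
  have hA : aCnt E v ≤ n - 1 := by
    have h1 := aCnt_le hlin hE hdeg hk2 heq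
    have h2 : aCnt E v ≠ n := by
      intro h
      exact hnsat ⟨by omega, by rw [hdeg]; exact heq, h⟩
    omega
  have ha' : (Conf.filter (fun u => HG.deg E u = k)).card ≤ aCnt E v := by
    unfold aCnt
    apply Finset.card_le_card
    intro u hu
    rw [Finset.mem_filter] at hu
    rw [Finset.mem_filter, hdeg]
    exact ⟨(Finset.mem_filter.mp (hsub hu.1)).1, hu.2⟩
  have hkn : k ≤ n := hdeg ▸ deg_le hE v
  have hknk : k * (n - k) + k * k = k * n := by
    rw [← Nat.mul_add]; congr 1; omega
  rw [heq] at hknk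
  obtain ⟨m, rfl⟩ : ∃ m, n = m + 1 := ⟨n - 1, by omega⟩
  have hA' : aCnt E v ≤ m := by omega
  have hfin : k * Conf.card < k * (m + 1) := by linarith
  exact Nat.lt_of_mul_lt_mul_left hfin

end EFL


namespace EFL
variable {V : Type*} {E : Finset (Finset V)} {n : ℕ}

/-- conflict graph on core vertices -/
def gph (E : Finset (Finset V)) : SimpleGraph V where
  Adj u w := u ≠ w ∧ 2 ≤ HG.deg E u ∧ 2 ≤ HG.deg E w ∧ ∃ e ∈ E, u ∈ e ∧ w ∈ e
  symm := ⟨by rintro u w ⟨h1, h2, h3, e, he, hu, hw⟩; exact ⟨h1.symm, h3, h2, e, he, hw, hu⟩⟩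
  loopless := ⟨fun u h => h.1 rfl⟩

lemma gadj_mem_adj {v u : V} (h : (gph E).Adj v u) : u ∈ HG.adj E v := by
  obtain ⟨h1, _, _, e, he, hv, hu⟩ := h
  exact mem_adj_iff.mpr ⟨h1.symm, e, he, hv, hu⟩

lemma sat_gadj_deg (hlin : HG.Linear E) (hE : E.card = n) {v u : V}
    (hsat : Satur n E v) (h : (gph E).Adj v u) : HG.deg E u = HG.deg E v := by
  obtain ⟨h1, _, hdu, e, he, hv, hu⟩ := h
  exact (sat_struct hlin hE hsat he hv).2 u hu hdu

/-- "bad" vertex: its whole connected component is saturated -/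
def Bd (n : ℕ) (E : Finset (Finset V)) (v : V) : Prop :=
  2 ≤ HG.deg E v ∧ ∀ w, (gph E).Reachable v w → Satur n E w

lemma bd_closed {v w : V} (h : Bd n E v) (hr : (gph E).Reachable v w) : Bd n E w :=
  ⟨(h.2 w hr).1, fun z hz => h.2 z (hr.trans hz)⟩

lemma bd_adj {v w : V} (h : Bd n E v) (ha : (gph E).Adj v w) : Bd n E w :=
  bd_closed h ha.reachable

/-- distance to the nearest unsaturated vertex -/
noncomputable def dU (n : ℕ) (E : Finset (Finset V)) (v : V) : ℕ :=
  sInf {ℓ | ∃ u, ¬ Satur n E u ∧ ∃ p : (gph E).Walk v u, p.length = ℓ}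

lemma support_verts {a b : V} (p : (gph E).Walk a b) (ha : a ∈ HG.verts E) :
    ∀ c ∈ p.support, c ∈ HG.verts E := by
  induction p with
  | nil => intro c hc; rw [SimpleGraph.Walk.support_nil, List.mem_singleton] at hc; rwa [hc]
  | cons h q ih =>
    intro c hc
    rw [SimpleGraph.Walk.support_cons, List.mem_cons] at hc
    rcases hc with rfl | hc
    · exact ha
    · exact ih (verts_mem_of_deg_pos (by have := h.2.2.1; omega)) c hc

/-- Every saturated non-bad vertex has a neighbour which is later in the σ-order. -/
lemma sat_good_sigma (hlin : HG.Linear E) (hE : E.card = n) {v : V}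
    (hsat : Satur n E v) (hnbd : ¬ Bd n E v) :
    ∃ x, (gph E).Adj v x ∧ HG.deg E x = HG.deg E v ∧
      ((HG.verts E).card - min (dU n E v) (HG.verts E).card) <
        (if Satur n E x then (HG.verts E).card - min (dU n E x) (HG.verts E).card
         else (HG.verts E).card + 1) := by
  set N := (HG.verts E).card with hN
  have hSne : {ℓ | ∃ u, ¬ Satur n E u ∧ ∃ p : (gph E).Walk v u, p.length = ℓ}.Nonempty := by
    rw [Bd] at hnbd
    push_neg at hnbd
    obtain ⟨w, hw, hwsat⟩ := hnbd hsat.1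
    exact ⟨(hw.some).length, w, hwsat, hw.some, rfl⟩
  have hmem := Nat.sInf_mem hSne
  obtain ⟨u0, hu0, p, hp⟩ := hmem
  have hp2 : p.length = dU n E v := hp
  -- dU v is positive
  have hpos : 1 ≤ dU n E v := by
    rcases Nat.eq_zero_or_pos (dU n E v) with h0 | h1
    · rw [h0] at hp2
      exact absurd ((SimpleGraph.Walk.eq_of_length_eq_zero hp2) ▸ hsat) hu0
    · exact h1
  -- dU v < N
  have hvverts : v ∈ HG.verts E := verts_mem_of_deg_pos (by have := hsat.1; omega)
  have hlt : dU n E v < N := by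
    have h1 : dU n E v ≤ p.bypass.length :=
      Nat.sInf_le ⟨u0, hu0, p.bypass, rfl⟩
    have h2 : p.bypass.support.Nodup := p.bypass_isPath.support_nodup
    have h3 : p.bypass.support.toFinset.card = p.bypass.support.length :=
      List.toFinset_card_of_nodup h2
    have h4 : p.bypass.support.toFinset ⊆ HG.verts E := by
      intro c hc
      rw [List.mem_toFinset] at hc
      exact support_verts p.bypass hvverts c hc
    have h5 := Finset.card_le_card h4
    have h6 := p.bypass.length_support
    omega
  -- first step of the walk
  cases p with
  | nil =>
    rw [SimpleGraph.Walk.length_nil] at hp2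
    omega
  | @cons _ x _ h q =>
    have hdx : HG.deg E x = HG.deg E v := sat_gadj_deg hlin hE hsat h
    refine ⟨x, h, hdx, ?_⟩
    by_cases hsx : Satur n E x
    · rw [if_pos hsx]
      have hq : dU n E x ≤ q.length := Nat.sInf_le ⟨u0, hu0, q, rfl⟩
      have hql : q.length = dU n E v - 1 := by
        rw [SimpleGraph.Walk.length_cons] at hp2
        omega
      have hxlt : dU n E x < dU n E v := by omega
      rw [min_eq_left (by omega : dU n E v ≤ N), min_eq_left (by omega : dU n E x ≤ N)]
      omega
    · rw [if_neg hsx]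
      omega

end EFL


namespace EFL
variable {V : Type*} {E : Finset (Finset V)} {n : ℕ}

lemma pairs_card_aux (s : Finset (Finset V)) :
    ((s ×ˢ s).filter (fun p => ¬ p.1 = p.2)).card = s.card * s.card - s.card := by
  have hdiag : (s ×ˢ s).filter (fun p => p.1 = p.2) = s.image (fun e => (e, e)) := by
    ext p
    simp only [Finset.mem_filter, Finset.mem_product, Finset.mem_image]
    constructor
    · rintro ⟨⟨h1, h2⟩, h3⟩
      exact ⟨p.1, h1, by rw [h3]; exact Prod.ext h3.symm rfl⟩
    · rintro ⟨e, he, rfl⟩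
      exact ⟨⟨he, he⟩, rfl⟩
  have h1 := Finset.card_filter_add_card_filter_not
    (s := s ×ˢ s) (p := fun p => p.1 = p.2)
  rw [hdiag, Finset.card_image_of_injective _ (fun a b h => by
    simpa using congrArg Prod.fst h), Finset.card_product] at h1
  omega

lemma xcard_bound (hlin : HG.Linear E) (hE : E.card = n) (X : Finset V) {k : ℕ}
    (hX : ∀ u ∈ X, HG.deg E u = k) :
    X.card * (k * k - k) ≤ n * n - n := by
  have hper : ∀ u ∈ X, k * k - k
      = ((E ×ˢ E).filter (fun p => ¬ p.1 = p.2 ∧ u ∈ p.1 ∧ u ∈ p.2)).card := by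
    intro u hu
    have hset : (E ×ˢ E).filter (fun p => ¬ p.1 = p.2 ∧ u ∈ p.1 ∧ u ∈ p.2)
        = ((E.filter (fun e => u ∈ e)) ×ˢ (E.filter (fun e => u ∈ e))).filter
            (fun p => ¬ p.1 = p.2) := by
      ext p
      simp only [Finset.mem_filter, Finset.mem_product]
      tauto
    rw [hset, pairs_card_aux]
    have : (E.filter (fun e => u ∈ e)).card = k := hX u hu
    rw [this]
  calc X.card * (k * k - k) = ∑ u ∈ X, (k * k - k) := by rw [Finset.sum_const, smul_eq_mul, mul_comm]
    _ = ∑ u ∈ X, ((E ×ˢ E).filter (fun p => ¬ p.1 = p.2 ∧ u ∈ p.1 ∧ u ∈ p.2)).card :=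
        Finset.sum_congr rfl hper
    _ = ∑ u ∈ X, ∑ p ∈ E ×ˢ E, if (¬ p.1 = p.2 ∧ u ∈ p.1 ∧ u ∈ p.2) then 1 else 0 :=
        Finset.sum_congr rfl (fun u _ => Finset.card_filter _ _)
    _ = ∑ p ∈ E ×ˢ E, ∑ u ∈ X, if (¬ p.1 = p.2 ∧ u ∈ p.1 ∧ u ∈ p.2) then 1 else 0 :=
        Finset.sum_comm
    _ ≤ ∑ p ∈ E ×ˢ E, if ¬ p.1 = p.2 then 1 else 0 := by
        apply Finset.sum_le_sum
        intro p hp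
        by_cases hne : p.1 = p.2
        · simp [hne]
        · rw [if_pos hne]
          have hinner : (∑ u ∈ X, if (¬ p.1 = p.2 ∧ u ∈ p.1 ∧ u ∈ p.2) then 1 else 0)
              = (X.filter (fun u => u ∈ p.1 ∧ u ∈ p.2)).card := by
            rw [Finset.card_filter]
            exact Finset.sum_congr rfl (fun u _ => by
              by_cases h : u ∈ p.1 ∧ u ∈ p.2 <;> simp [h, hne])
          rw [hinner]
          calc (X.filter (fun u => u ∈ p.1 ∧ u ∈ p.2)).card ≤ (p.1 ∩ p.2).card := by
                apply Finset.card_le_card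
                intro x hx
                rw [Finset.mem_filter] at hx
                exact Finset.mem_inter.mpr hx.2
            _ ≤ 1 := by
                rw [Finset.mem_product] at hp
                exact hlin p.1 hp.1 p.2 hp.2 hne
    _ = ((E ×ˢ E).filter (fun p => ¬ p.1 = p.2)).card := (Finset.card_filter _ _).symm
    _ = n * n - n := by rw [pairs_card_aux, hE]

end EFL


namespace EFL
variable {V : Type*} {E : Finset (Finset V)} {n : ℕ}

lemma bd_deg (hlin : HG.Linear E) (hE : E.card = n) {v₀ : V} (hbd : Bd n E v₀) :
    ∀ u, (gph E).Reachable v₀ u → HG.deg E u = HG.deg E v₀ := by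
  have key : ∀ (a b : V) (p : (gph E).Walk a b), Bd n E a → HG.deg E b = HG.deg E a := by
    intro a b p
    induction p with
    | nil => intro _; rfl
    | @cons a x b h q ih =>
      intro hba
      have hx : Bd n E x := bd_adj hba h
      have h1 := ih hx
      rw [h1, sat_gadj_deg hlin hE (hba.2 a (SimpleGraph.Reachable.refl a)) h]
  intro u hr
  exact key v₀ u hr.some hbd

lemma bad_coloring (hlin : HG.Linear E) (hE : E.card = n) (hn : 0 < n)
    {v₀ : V} (hbd : Bd n E v₀) :
    ∃ f : V → Fin n, ∀ u w, (gph E).Reachable v₀ u → (gph E).Reachable v₀ w →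
      (gph E).Adj u w → f u ≠ f w := by
  classical
  obtain ⟨k, hk⟩ : ∃ k, k = HG.deg E v₀ := ⟨_, rfl⟩
  have hsat0 : Satur n E v₀ := hbd.2 v₀ (SimpleGraph.Reachable.refl v₀)
  have hk2 : 2 ≤ k := by rw [hk]; exact hsat0.1
  have hkk : k * k = n := by rw [hk]; exact hsat0.2.1
  have hkn : k ≤ n := by nlinarith
  set X := (HG.verts E).filter (fun u => (gph E).Reachable v₀ u) with hX
  have hXmem : ∀ u, u ∈ X ↔ (u ∈ HG.verts E ∧ (gph E).Reachable v₀ u) := by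
    intro u; rw [hX, Finset.mem_filter]
  have hXsat : ∀ u ∈ X, Satur n E u := fun u hu => hbd.2 u ((hXmem u).mp hu).2
  have hXdeg : ∀ u ∈ X, HG.deg E u = k := fun u hu => by
    rw [hk]; exact bd_deg hlin hE hbd u ((hXmem u).mp hu).2
  have hXreach : ∀ u, (gph E).Reachable v₀ u → u ∈ X := by
    intro u hr
    refine (hXmem u).mpr ⟨verts_mem_of_deg_pos ?_, hr⟩
    have := (hbd.2 u hr).1; omega
  -- neighbourhoods
  have hAdjNbr : ∀ u w, (gph E).Adj u w → w ∈ (HG.adj E u).filter (fun z => 2 ≤ HG.deg E z) := by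
    intro u w h
    obtain ⟨hne, h2u, h2w, e, he, hue, hwe⟩ := h
    exact Finset.mem_filter.mpr ⟨mem_adj_iff.mpr ⟨hne.symm, e, he, hue, hwe⟩, h2w⟩
  have hNbrAdj : ∀ u ∈ X, ∀ w ∈ (HG.adj E u).filter (fun z => 2 ≤ HG.deg E z),
      (gph E).Adj u w := by
    intro u hu w hw
    rw [Finset.mem_filter] at hw
    obtain ⟨hne, e, he, hue, hwe⟩ := mem_adj_iff.mp hw.1
    exact ⟨hne.symm, (hXsat u hu).1, hw.2, e, he, hue, hwe⟩
  have hNbrX : ∀ u ∈ X, (HG.adj E u).filter (fun z => 2 ≤ HG.deg E z) ⊆ X.erase u := by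
    intro u hu w hw
    have hadj := hNbrAdj u hu w hw
    refine Finset.mem_erase.mpr ⟨hadj.ne.symm, hXreach w (((hXmem u).mp hu).2.trans hadj.reachable)⟩
  have hNbrcard : ∀ u ∈ X, ((HG.adj E u).filter (fun z => 2 ≤ HG.deg E z)).card = n :=
    fun u hu => sat_nbr_card hlin hE (hXsat u hu)
  -- X is large
  have hX1 : n + 1 ≤ X.card := by
    have h0 : v₀ ∈ X := hXreach v₀ (SimpleGraph.Reachable.refl v₀)
    have hsub : insert v₀ ((HG.adj E v₀).filter (fun z => 2 ≤ HG.deg E z)) ⊆ X := by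
      intro x hx
      rcases Finset.mem_insert.mp hx with rfl | hx
      · exact h0
      · exact Finset.mem_of_mem_erase (hNbrX v₀ h0 hx)
    have hnotmem : v₀ ∉ (HG.adj E v₀).filter (fun z => 2 ≤ HG.deg E z) := by
      intro h
      exact (mem_adj_iff.mp (Finset.mem_filter.mp h).1).1 rfl
    have := Finset.card_le_card hsub
    rw [Finset.card_insert_of_notMem hnotmem, hNbrcard v₀ h0] at this
    exact this
  -- X is not too large
  have hX2 : X.card ≤ n + k := by
    have h1 := xcard_bound hlin hE X hXdeg
    by_contra hcon
    push_neg at hcon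
    obtain ⟨j, rfl⟩ : ∃ j, k = j + 2 := ⟨k - 2, by omega⟩
    have e2 : n = j*j + 4*j + 4 := by rw [← hkk]; ring
    have e3 : (j+2) * (j+2) - (j+2) = j*j + 3*j + 2 := by
      have : (j+2)*(j+2) = j*j+4*j+4 := by ring
      omega
    have h2 : (n + (j+2) + 1) * ((j+2) * (j+2) - (j+2)) ≤ X.card * ((j+2)*(j+2)-(j+2)) :=
      Nat.mul_le_mul_right _ (by omega)
    have h3 : (n + (j+2) + 1) * ((j+2)*(j+2)-(j+2)) ≤ n * n - n := le_trans h2 h1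
    have e4 : (n + (j+2) + 1) * ((j+2)*(j+2) - (j+2)) = (j*j + 5*j + 7) * (j*j + 3*j + 2) := by
      rw [e3]; congr 1; omega
    have e5 : (j*j + 5*j + 7) * (j*j + 3*j + 2)
        = j*j*j*j + 8*(j*j*j) + 24*(j*j) + 31*j + 14 := by ring
    have e6 : n * n = (j*j+4*j+4) * (j*j+4*j+4) := by rw [← e2]
    have e7 : (j*j+4*j+4) * (j*j+4*j+4)
        = j*j*j*j + 8*(j*j*j) + 24*(j*j) + 32*j + 16 := by ring
    omega
  obtain ⟨m, hXm⟩ : ∃ m, X.card = n + 1 + m := ⟨X.card - (n+1), by omega⟩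
  have hmk : m ≤ k - 1 := by omega
  -- m ≥ 1 : full edge divisibility count
  have hm1 : 1 ≤ m := by
    by_contra h0
    have hXn1 : X.card = n + 1 := by omega
    set F := E.filter (fun e => ∃ u ∈ X, u ∈ e) with hF
    have hFcard : ∀ e ∈ F, (e.filter (fun w => w ∈ X)).card = k + 1 := by
      intro e he
      rw [hF, Finset.mem_filter] at he
      obtain ⟨heE, u, hu, hue⟩ := he
      have hdu : HG.deg E u = k := hXdeg u hu
      have hss := sat_struct hlin hE (hXsat u hu) heE hue
      have hseteq : e.filter (fun w => w ∈ X) = e.filter (fun w => HG.deg E w = HG.deg E u) := by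
        apply Finset.filter_congr
        intro w hw
        constructor
        · intro hwX; rw [hXdeg w hwX, hdu]
        · intro hdw
          by_cases hwu : w = u
          · rw [hwu]; exact hu
          · have hadj : (gph E).Adj u w := by
              refine ⟨fun hcon => hwu hcon.symm, ?_, ?_, e, heE, hue, hw⟩
              · rw [hdu]; omega
              · rw [hdw, hdu]; omega
            exact hXreach w ((((hXmem u).mp hu).2).trans hadj.reachable)
      rw [hseteq, hss.1, hdu]
    have hswap : ∑ e ∈ F, (e.filter (fun w => w ∈ X)).card
        = ∑ u ∈ X, (E.filter (fun e => u ∈ e)).card := by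
      have h1 : ∀ e ∈ F, (e.filter (fun w => w ∈ X)).card
          = ∑ u ∈ X, if u ∈ e then 1 else 0 := by
        intro e _
        have hseteq : e.filter (fun w => w ∈ X) = X.filter (fun w => w ∈ e) := by
          ext z
          simp only [Finset.mem_filter]
          exact and_comm
        rw [hseteq, Finset.card_filter]
      rw [Finset.sum_congr rfl h1, Finset.sum_comm]
      apply Finset.sum_congr rfl
      intro u hu
      have h2 : ∑ e ∈ F, (if u ∈ e then 1 else 0) = (F.filter (fun e => u ∈ e)).card :=
        (Finset.card_filter _ _).symm
      rw [h2]
      congr 1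
      ext e
      rw [hF, Finset.filter_filter, Finset.mem_filter, Finset.mem_filter]
      constructor
      · rintro ⟨he, _, hu'⟩; exact ⟨he, hu'⟩
      · rintro ⟨he, hu'⟩; exact ⟨he, ⟨u, hu, hu'⟩, hu'⟩
    have hleft : ∑ e ∈ F, (e.filter (fun w => w ∈ X)).card = F.card * (k+1) := by
      rw [Finset.sum_congr rfl hFcard, Finset.sum_const, smul_eq_mul]
    have hright : ∑ u ∈ X, (E.filter (fun e => u ∈ e)).card = X.card * k := by
      have : ∀ u ∈ X, (E.filter (fun e => u ∈ e)).card = k := fun u hu => hXdeg u hu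
      rw [Finset.sum_congr rfl this, Finset.sum_const, smul_eq_mul]
    have hcount : F.card * (k+1) = (n+1) * k := by
      rw [← hleft, hswap, hright, hXn1]
    obtain ⟨j, rfl⟩ : ∃ j, k = j + 2 := ⟨k - 2, by omega⟩
    have hdvd : (j+3) ∣ (n+1) * (j+2) := ⟨F.card, by rw [← hcount]; ring⟩
    have hdvd2 : (j+3) ∣ (n+1) * (j+2) + 2 := by
      refine ⟨j*j + 3*j + 4, ?_⟩
      have e2 : n = j*j + 4*j + 4 := by rw [← hkk]; ring
      rw [e2]; ring
    have hdvd3 : (j+3) ∣ 2 := by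
      have hsub := Nat.dvd_sub hdvd2 hdvd
      have : (n+1) * (j+2) + 2 - (n+1) * (j+2) = 2 := by omega
      rwa [this] at hsub
    have := Nat.le_of_dvd (by norm_num) hdvd3
    omega
  -- non-neighbour sets
  have hnonnbr : ∀ u ∈ X,
      ((X.erase u) \ ((HG.adj E u).filter (fun z => 2 ≤ HG.deg E z))).card = m := by
    intro u hu
    rw [Finset.card_sdiff_of_subset (hNbrX u hu), Finset.card_erase_of_mem hu,
      hNbrcard u hu]
    omega
  -- extraction of disjoint non-adjacent pairs
  have hpairs : ∀ jj : ℕ, jj ≤ m + 1 → ∃ pr : Finset (V × V), pr.card = jj ∧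
      (∀ p ∈ pr, p.1 ∈ X ∧ p.2 ∈ X ∧ p.1 ≠ p.2 ∧ ¬ (gph E).Adj p.1 p.2) ∧
      (∀ p ∈ pr, ∀ q ∈ pr, p ≠ q → p.1 ≠ q.1 ∧ p.1 ≠ q.2 ∧ p.2 ≠ q.1 ∧ p.2 ≠ q.2) := by
    intro jj
    induction jj with
    | zero => intro _; exact ⟨∅, by simp, by simp, by simp⟩
    | succ jj ih =>
      intro hjj
      obtain ⟨pr, hcard, hpmem, hpdisj⟩ := ih (by omega)
      have hcov : (pr.biUnion (fun p => ({p.1, p.2} : Finset V))).card ≤ 2 * jj := by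
        calc (pr.biUnion (fun p => ({p.1, p.2} : Finset V))).card
            ≤ ∑ p ∈ pr, ({p.1, p.2} : Finset V).card := Finset.card_biUnion_le
          _ ≤ ∑ p ∈ pr, 2 := Finset.sum_le_sum (fun p _ => by
              calc ({p.1, p.2} : Finset V).card ≤ ({p.2} : Finset V).card + 1 :=
                    Finset.card_insert_le _ _
                _ = 2 := by rw [Finset.card_singleton])
          _ = 2 * jj := by rw [Finset.sum_const, smul_eq_mul, hcard, mul_comm]
      have hRcard : X.card - 2 * jj ≤ (X \ pr.biUnion (fun p => ({p.1, p.2} : Finset V))).card := by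
        have h := Finset.le_card_sdiff (pr.biUnion (fun p => ({p.1, p.2} : Finset V))) X
        omega
      have hex : ∃ u ∈ X \ pr.biUnion (fun p => ({p.1, p.2} : Finset V)),
          ∃ w ∈ X \ pr.biUnion (fun p => ({p.1, p.2} : Finset V)),
          u ≠ w ∧ ¬ (gph E).Adj u w := by
        by_contra hno
        push_neg at hno
        have hRX : (X \ pr.biUnion (fun p => ({p.1, p.2} : Finset V))) ⊆ X :=
          Finset.sdiff_subset
        -- each vertex of R has all its non-neighbours outside R
        have hT1 : ((X \ pr.biUnion (fun p => ({p.1, p.2} : Finset V))).biUnion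
            (fun u => (((X.erase u) \ ((HG.adj E u).filter (fun z => 2 ≤ HG.deg E z)))).image
              (fun w => (u, w)))).card
            = (X \ pr.biUnion (fun p => ({p.1, p.2} : Finset V))).card * m := by
          rw [Finset.card_biUnion]
          · have : ∀ u ∈ X \ pr.biUnion (fun p => ({p.1, p.2} : Finset V)),
                ((((X.erase u) \ ((HG.adj E u).filter (fun z => 2 ≤ HG.deg E z)))).image
                  (fun w => (u, w))).card = m := by
              intro u hu
              rw [Finset.card_image_of_injective _ (fun a b h => by
                simpa using congrArg Prod.snd h)]
              exact hnonnbr u (hRX hu)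
            rw [Finset.sum_congr rfl this, Finset.sum_const, smul_eq_mul]
          · intro a ha b hb hab
            simp only [Finset.disjoint_left]
            intro p hp hp'
            rw [Finset.mem_image] at hp hp'
            obtain ⟨w1, _, hw1⟩ := hp
            obtain ⟨w2, _, hw2⟩ := hp'
            have e1 : a = p.1 := congrArg Prod.fst hw1
            have e2 : b = p.1 := congrArg Prod.fst hw2
            exact hab (e1.trans e2.symm)
        have hT2 : ((X \ pr.biUnion (fun p => ({p.1, p.2} : Finset V))).biUnion
            (fun u => (((X.erase u) \ ((HG.adj E u).filter (fun z => 2 ≤ HG.deg E z)))).image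
              (fun w => (u, w))))
            ⊆ ((X \ (X \ pr.biUnion (fun p => ({p.1, p.2} : Finset V)))).biUnion
            (fun w => (((X.erase w) \ ((HG.adj E w).filter (fun z => 2 ≤ HG.deg E z)))).image
              (fun u => (u, w)))) := by
          intro p hp
          rw [Finset.mem_biUnion] at hp ⊢
          obtain ⟨u, hu, hpim⟩ := hp
          rw [Finset.mem_image] at hpim
          obtain ⟨w, hw, rfl⟩ := hpim
          rw [Finset.mem_sdiff, Finset.mem_erase] at hw
          have hwX : w ∈ X := hw.1.2
          have hwne : w ≠ u := hw.1.1
          -- w is not in R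
          have hwnR : w ∉ X \ pr.biUnion (fun p => ({p.1, p.2} : Finset V)) := by
            intro hwR
            exact hw.2 (hAdjNbr u w (hno u hu w hwR (fun h => hwne h.symm)))
          refine ⟨w, Finset.mem_sdiff.mpr ⟨hwX, hwnR⟩, ?_⟩
          rw [Finset.mem_image]
          refine ⟨u, ?_, rfl⟩
          rw [Finset.mem_sdiff, Finset.mem_erase]
          refine ⟨⟨fun h => hwne h.symm, hRX hu⟩, ?_⟩
          intro huNbr
          have hadj := hNbrAdj w hwX u huNbr
          exact hw.2 (hAdjNbr u w hadj.symm)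
        have hT3 : ((X \ (X \ pr.biUnion (fun p => ({p.1, p.2} : Finset V)))).biUnion
            (fun w => (((X.erase w) \ ((HG.adj E w).filter (fun z => 2 ≤ HG.deg E z)))).image
              (fun u => (u, w)))).card
            ≤ (X \ (X \ pr.biUnion (fun p => ({p.1, p.2} : Finset V)))).card * m := by
          calc _ ≤ ∑ w ∈ X \ (X \ pr.biUnion (fun p => ({p.1, p.2} : Finset V))),
                (((X.erase w) \ ((HG.adj E w).filter (fun z => 2 ≤ HG.deg E z)))).card := by
                refine le_trans Finset.card_biUnion_le (Finset.sum_le_sum ?_)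
                intro w _
                exact Finset.card_image_le
            _ ≤ _ := by
                apply le_of_eq
                have : ∀ w ∈ X \ (X \ pr.biUnion (fun p => ({p.1, p.2} : Finset V))),
                    (((X.erase w) \ ((HG.adj E w).filter (fun z => 2 ≤ HG.deg E z)))).card = m := by
                  intro w hw
                  exact hnonnbr w (Finset.mem_sdiff.mp hw).1
                rw [Finset.sum_congr rfl this, Finset.sum_const, smul_eq_mul]
        have hsml : (X \ (X \ pr.biUnion (fun p => ({p.1, p.2} : Finset V)))).card ≤ 2 * jj := by
          refine le_trans (Finset.card_le_card ?_) hcov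
          intro x hx
          rw [Finset.mem_sdiff, Finset.mem_sdiff] at hx
          by_contra hc
          exact hx.2 ⟨hx.1, hc⟩
        have hchain := le_trans (le_of_eq hT1.symm) (le_trans (Finset.card_le_card hT2) hT3)
        have hRle : (X \ pr.biUnion (fun p => ({p.1, p.2} : Finset V))).card ≤ 2 * jj := by
          have h2 : (X \ pr.biUnion (fun p => ({p.1, p.2} : Finset V))).card * m
              ≤ (2 * jj) * m := le_trans hchain (Nat.mul_le_mul_right _ hsml)
          exact Nat.le_of_mul_le_mul_right h2 (by omega)
        obtain ⟨j, hj⟩ : ∃ j, k = j + 2 := ⟨k - 2, by omega⟩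
        have e2 : n = j*j + 4*j + 4 := by rw [← hkk, hj]; ring
        omega
      obtain ⟨u, hu, w, hw, hne, hnadj⟩ := hex
      have huX : u ∈ X := (Finset.mem_sdiff.mp hu).1
      have hwX : w ∈ X := (Finset.mem_sdiff.mp hw).1
      have hucov : u ∉ pr.biUnion (fun p => ({p.1, p.2} : Finset V)) :=
        (Finset.mem_sdiff.mp hu).2
      have hwcov : w ∉ pr.biUnion (fun p => ({p.1, p.2} : Finset V)) :=
        (Finset.mem_sdiff.mp hw).2
      have hmemcov : ∀ q ∈ pr, q.1 ∈ pr.biUnion (fun p => ({p.1, p.2} : Finset V))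
          ∧ q.2 ∈ pr.biUnion (fun p => ({p.1, p.2} : Finset V)) := by
        intro q hq
        constructor
        · exact Finset.mem_biUnion.mpr ⟨q, hq, by simp⟩
        · exact Finset.mem_biUnion.mpr ⟨q, hq, by simp⟩
      refine ⟨insert (u, w) pr, ?_, ?_, ?_⟩
      · rw [Finset.card_insert_of_notMem, hcard]
        intro hmem'
        exact hucov ((hmemcov _ hmem').1)
      · intro p hp
        rcases Finset.mem_insert.mp hp with rfl | hp
        · exact ⟨huX, hwX, hne, hnadj⟩
        · exact hpmem p hp
      · intro p hp q hq hpq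
        rcases Finset.mem_insert.mp hp with rfl | hp' <;>
          rcases Finset.mem_insert.mp hq with rfl | hq'
        · exact absurd rfl hpq
        · have h1 := (hmemcov q hq').1
          have h2 := (hmemcov q hq').2
          refine ⟨fun h => hucov ?_, fun h => hucov ?_, fun h => hwcov ?_, fun h => hwcov ?_⟩
          · rw [show u = q.1 from h]; exact h1
          · rw [show u = q.2 from h]; exact h2
          · rw [show w = q.1 from h]; exact h1
          · rw [show w = q.2 from h]; exact h2
        · have h1 := (hmemcov p hp').1
          have h2 := (hmemcov p hp').2
          refine ⟨fun h => hucov ?_, fun h => hwcov ?_, fun h => hucov ?_, fun h => hwcov ?_⟩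
          · rw [← show p.1 = u from h]; exact h1
          · rw [← show p.1 = w from h]; exact h1
          · rw [← show p.2 = u from h]; exact h2
          · rw [← show p.2 = w from h]; exact h2
        · exact hpdisj p hp' q hq' hpq
  obtain ⟨pr, hprcard, hprmem, hprdisj⟩ := hpairs (m + 1) le_rfl
  have hcovX : pr.biUnion (fun p => ({p.1, p.2} : Finset V)) ⊆ X := by
    intro z hz
    rw [Finset.mem_biUnion] at hz
    obtain ⟨p, hp, hzp⟩ := hz
    rcases Finset.mem_insert.mp hzp with rfl | hzp
    · exact (hprmem p hp).1
    · rw [Finset.mem_singleton] at hzp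
      rw [hzp]
      exact (hprmem p hp).2.1
  have hcovcard : (pr.biUnion (fun p => ({p.1, p.2} : Finset V))).card = 2 * (m + 1) := by
    rw [Finset.card_biUnion]
    · have : ∀ p ∈ pr, ({p.1, p.2} : Finset V).card = 2 := by
        intro p hp
        exact Finset.card_pair (hprmem p hp).2.2.1
      rw [Finset.sum_congr rfl this, Finset.sum_const, smul_eq_mul, hprcard, mul_comm]
    · intro p hp q hq hpq
      obtain ⟨d1, d2, d3, d4⟩ := hprdisj p hp q hq hpq
      simp only [Finset.disjoint_left]
      intro z hz hz'
      rcases Finset.mem_insert.mp hz with rfl | hz <;>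
        rcases Finset.mem_insert.mp hz' with h' | h'
      · exact d1 h'
      · rw [Finset.mem_singleton] at h'; exact d2 h'
      · rw [Finset.mem_singleton] at hz
        rw [hz] at h'
        exact d3 h'
      · rw [Finset.mem_singleton] at hz h'
        rw [hz] at h'
        exact d4 h'
  have hLcard : (X \ pr.biUnion (fun p => ({p.1, p.2} : Finset V))).card = n - m - 1 := by
    rw [Finset.card_sdiff_of_subset hcovX, hcovcard]
    omega
  have hBcard : (pr.image (fun p => ({p.1, p.2} : Finset V))
      ∪ (X \ pr.biUnion (fun p => ({p.1, p.2} : Finset V))).image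
        (fun z => ({z} : Finset V))).card ≤ n := by
    calc _ ≤ (pr.image (fun p => ({p.1, p.2} : Finset V))).card
          + ((X \ pr.biUnion (fun p => ({p.1, p.2} : Finset V))).image
            (fun z => ({z} : Finset V))).card := Finset.card_union_le _ _
      _ ≤ (m + 1) + (n - m - 1) := by
          have h1 := Finset.card_image_le (s := pr) (f := fun p => ({p.1, p.2} : Finset V))
          have h2 := Finset.card_image_le
            (s := X \ pr.biUnion (fun p => ({p.1, p.2} : Finset V)))
            (f := fun z => ({z} : Finset V))
          omega
      _ ≤ n := by omega
  set B := pr.image (fun p => ({p.1, p.2} : Finset V))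
      ∪ (X \ pr.biUnion (fun p => ({p.1, p.2} : Finset V))).image
        (fun z => ({z} : Finset V)) with hBdef
  have hcover : ∀ u ∈ X, ∃ b ∈ B, u ∈ b := by
    intro u hu
    by_cases hc : u ∈ pr.biUnion (fun p => ({p.1, p.2} : Finset V))
    · rw [Finset.mem_biUnion] at hc
      obtain ⟨p, hp, hup⟩ := hc
      exact ⟨{p.1, p.2}, Finset.mem_union_left _ (Finset.mem_image_of_mem _ hp), hup⟩
    · exact ⟨{u}, Finset.mem_union_right _
        (Finset.mem_image_of_mem _ (Finset.mem_sdiff.mpr ⟨hu, hc⟩)), Finset.mem_singleton_self u⟩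
  have hdisjB : ∀ b ∈ B, ∀ b' ∈ B, ∀ u, u ∈ b → u ∈ b' → b = b' := by
    have hsingle : ∀ z ∈ X \ pr.biUnion (fun p => ({p.1, p.2} : Finset V)),
        ∀ p ∈ pr, ∀ u, u ∈ ({z} : Finset V) → u ∈ ({p.1, p.2} : Finset V) → False := by
      intro z hz p hp u hu hup
      rw [Finset.mem_singleton] at hu
      subst hu
      exact (Finset.mem_sdiff.mp hz).2 (Finset.mem_biUnion.mpr ⟨p, hp, hup⟩)
    intro b hb b' hb' u hub hub'
    rcases Finset.mem_union.mp hb with h1 | h1 <;> rcases Finset.mem_union.mp hb' with h2 | h2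
    · rw [Finset.mem_image] at h1 h2
      obtain ⟨p, hp, rfl⟩ := h1
      obtain ⟨q, hq, rfl⟩ := h2
      by_cases hpq : p = q
      · rw [hpq]
      · obtain ⟨d1, d2, d3, d4⟩ := hprdisj p hp q hq hpq
        exfalso
        rcases Finset.mem_insert.mp hub with rfl | hub <;>
          rcases Finset.mem_insert.mp hub' with h' | h'
        · exact d1 h'
        · rw [Finset.mem_singleton] at h'; exact d2 h'
        · rw [Finset.mem_singleton] at hub
          rw [hub] at h'
          exact d3 h'
        · rw [Finset.mem_singleton] at hub h'
          rw [hub] at h'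
          exact d4 h'
    · rw [Finset.mem_image] at h1 h2
      obtain ⟨p, hp, rfl⟩ := h1
      obtain ⟨z, hz, rfl⟩ := h2
      exact (hsingle z hz p hp u hub' hub).elim
    · rw [Finset.mem_image] at h1 h2
      obtain ⟨z, hz, rfl⟩ := h1
      obtain ⟨p, hp, rfl⟩ := h2
      exact (hsingle z hz p hp u hub hub').elim
    · rw [Finset.mem_image] at h1 h2
      obtain ⟨z, hz, rfl⟩ := h1
      obtain ⟨z', hz', rfl⟩ := h2
      rw [Finset.mem_singleton] at hub hub'
      rw [← hub, ← hub']
  have hindep : ∀ b ∈ B, ∀ u ∈ b, ∀ w ∈ b, u ≠ w → ¬ (gph E).Adj u w := by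
    intro b hb u hub w hwb hneq
    rcases Finset.mem_union.mp hb with h1 | h1
    · rw [Finset.mem_image] at h1
      obtain ⟨p, hp, rfl⟩ := h1
      have hpnadj := (hprmem p hp).2.2.2
      rcases Finset.mem_insert.mp hub with rfl | hub'
      · rcases Finset.mem_insert.mp hwb with rfl | hwb'
        · exact absurd rfl hneq
        · rw [Finset.mem_singleton] at hwb'
          subst hwb'
          exact hpnadj
      · rw [Finset.mem_singleton] at hub'
        subst hub'
        rcases Finset.mem_insert.mp hwb with rfl | hwb'
        · intro had
          exact hpnadj had.symm
        · rw [Finset.mem_singleton] at hwb'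
          subst hwb'
          exact absurd rfl hneq
    · rw [Finset.mem_image] at h1
      obtain ⟨z, hz, rfl⟩ := h1
      rw [Finset.mem_singleton] at hub hwb
      exact absurd (hub.trans hwb.symm) hneq
  set fX : V → Fin n := fun u => if h : ∃ b ∈ B, u ∈ b then
      Fin.castLE hBcard (B.equivFin ⟨h.choose, h.choose_spec.1⟩) else ⟨0, hn⟩ with hfXdef
  refine ⟨fX, ?_⟩
  intro u w hru hrw hadj
  have huX : u ∈ X := hXreach u hru
  have hwX : w ∈ X := hXreach w hrw
  have h1 : ∃ b ∈ B, u ∈ b := hcover u huX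
  have h2 : ∃ b ∈ B, w ∈ b := hcover w hwX
  have hfu : fX u = Fin.castLE hBcard (B.equivFin ⟨h1.choose, h1.choose_spec.1⟩) := dif_pos h1
  have hfw : fX w = Fin.castLE hBcard (B.equivFin ⟨h2.choose, h2.choose_spec.1⟩) := dif_pos h2
  rw [hfu, hfw]
  intro heqc
  have h3 := Fin.castLE_injective hBcard heqc
  have h4 := B.equivFin.injective h3
  have h5 : h1.choose = h2.choose := congrArg Subtype.val h4
  have h6 : u ∈ h1.choose := h1.choose_spec.2
  have h7 : w ∈ h1.choose := h5 ▸ h2.choose_spec.2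
  exact hindep h1.choose h1.choose_spec.1 u h6 w h7 hadj.ne hadj

end EFL


open EFL in
theorem stmt12' {V : Type*} (n : ℕ) (hn : 0 < n)
    (E : Finset (Finset V)) (hlin : HG.Linear E)
    (hE : E.card = n) (huniform : ∀ e ∈ E, e.card = n)
    (hwd : ∀ k : ℕ, 2 ≤ k → (k : ℝ) < Real.sqrt n →
      ((HG.verts E).filter (fun v => HG.deg E v = k)).card ≤ k ^ 2) :
    IsLeast {m : ℕ | ∃ f : V → Fin m, HG.Proper E f} n := by
  have hwd' : ∀ k : ℕ, 2 ≤ k → k * k < n →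
      ((HG.verts E).filter (fun v => HG.deg E v = k)).card ≤ k * k := by
    intro k hk2 hkn
    have hcast : (k : ℝ) < Real.sqrt n := by
      rw [show ((n : ℕ) : ℝ) = ((n : ℝ)) from rfl]
      rw [Real.lt_sqrt (by positivity)]
      have : ((k * k : ℕ) : ℝ) < ((n : ℕ) : ℝ) := by exact_mod_cast hkn
      push_cast at this ⊢
      nlinarith
    have h := hwd k hk2 hcast
    calc _ ≤ k ^ 2 := h
      _ = k * k := by ring
  constructor
  · -- existence of a proper n-colouring
    show ∃ f : V → Fin n, HG.Proper E f
    classical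
    set core := (HG.verts E).filter (fun v => 2 ≤ HG.deg E v) with hcore
    have hcoremem : ∀ v, v ∈ core ↔ (v ∈ HG.verts E ∧ 2 ≤ HG.deg E v) := by
      intro v; rw [hcore, Finset.mem_filter]
    have hcorein : ∀ v, 2 ≤ HG.deg E v → v ∈ core := fun v h =>
      (hcoremem v).mpr ⟨verts_mem_of_deg_pos (by omega), h⟩
    -- index
    set idx : V → ℕ := fun v => if h : v ∈ core then (core.equivFin ⟨v, h⟩ : Fin core.card).val else 0
      with hidx
    have hidxlt : ∀ v, idx v < core.card + 1 := by
      intro v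
      simp only [hidx]
      by_cases h : v ∈ core
      · rw [dif_pos h]
        have := (core.equivFin ⟨v, h⟩).isLt
        omega
      · rw [dif_neg h]; omega
    have hidxinj : ∀ u ∈ core, ∀ v ∈ core, idx u = idx v → u = v := by
      intro u hu v hv h
      simp only [hidx] at h
      rw [dif_pos hu, dif_pos hv] at h
      have h2 : core.equivFin ⟨u, hu⟩ = core.equivFin ⟨v, hv⟩ := Fin.ext h
      have h3 := core.equivFin.injective h2
      exact congrArg Subtype.val h3
    -- sigma and rho
    set σ : V → ℕ := fun v => if Satur n E v
        then (HG.verts E).card - min (dU n E v) (HG.verts E).card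
        else (HG.verts E).card + 1 with hσ
    have hσle : ∀ v, σ v ≤ (HG.verts E).card + 1 := by
      intro v
      simp only [hσ]
      by_cases h : Satur n E v
      · rw [if_pos h]; omega
      · rw [if_neg h]
    set ρ : V → ℕ := fun v =>
        ((n + 1 - HG.deg E v) * ((HG.verts E).card + 2) + σ v) * (core.card + 1) + idx v
      with hρ
    have hρdeg : ∀ u v : V, HG.deg E u < HG.deg E v → ρ v < ρ u := by
      intro u v hlt'
      have hdv : HG.deg E v ≤ n := deg_le hE v
      have h3 : (n + 1 - HG.deg E v) + 1 ≤ n + 1 - HG.deg E u := by omega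
      simp only [hρ]
      have e1 : ((n + 1 - HG.deg E v) * ((HG.verts E).card + 2) + σ v + 1) * (core.card + 1)
          = ((n + 1 - HG.deg E v) * ((HG.verts E).card + 2) + σ v) * (core.card + 1)
            + (core.card + 1) := by ring
      have step1 : ((n + 1 - HG.deg E v) * ((HG.verts E).card + 2) + σ v) * (core.card + 1) + idx v
          < ((n + 1 - HG.deg E v) * ((HG.verts E).card + 2) + σ v + 1) * (core.card + 1) := by
        have := hidxlt v
        omega
      have step2 : ((n + 1 - HG.deg E v) * ((HG.verts E).card + 2) + σ v + 1) * (core.card + 1)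
          ≤ ((n + 1 - HG.deg E u) * ((HG.verts E).card + 2)) * (core.card + 1) := by
        apply Nat.mul_le_mul_right
        calc (n + 1 - HG.deg E v) * ((HG.verts E).card + 2) + σ v + 1
            ≤ (n + 1 - HG.deg E v) * ((HG.verts E).card + 2) + ((HG.verts E).card + 2) := by
              have := hσle v; omega
          _ = ((n + 1 - HG.deg E v) + 1) * ((HG.verts E).card + 2) := by ring
          _ ≤ (n + 1 - HG.deg E u) * ((HG.verts E).card + 2) := Nat.mul_le_mul_right _ h3
      calc ((n + 1 - HG.deg E v) * ((HG.verts E).card + 2) + σ v) * (core.card + 1) + idx v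
          < ((n + 1 - HG.deg E v) * ((HG.verts E).card + 2) + σ v + 1) * (core.card + 1) := step1
        _ ≤ ((n + 1 - HG.deg E u) * ((HG.verts E).card + 2)) * (core.card + 1) := step2
        _ ≤ ((n + 1 - HG.deg E u) * ((HG.verts E).card + 2) + σ u) * (core.card + 1) :=
            Nat.mul_le_mul_right _ (Nat.le_add_right _ _)
        _ ≤ _ := Nat.le_add_right _ _
    have hρsig : ∀ u v : V, HG.deg E u = HG.deg E v → σ v < σ u → ρ v < ρ u := by
      intro u v hdeq hslt
      simp only [hρ]
      rw [hdeq]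
      have step1 : ((n + 1 - HG.deg E v) * ((HG.verts E).card + 2) + σ v) * (core.card + 1) + idx v
          < ((n + 1 - HG.deg E v) * ((HG.verts E).card + 2) + σ v + 1) * (core.card + 1) := by
        have e1 : ((n + 1 - HG.deg E v) * ((HG.verts E).card + 2) + σ v + 1) * (core.card + 1)
            = ((n + 1 - HG.deg E v) * ((HG.verts E).card + 2) + σ v) * (core.card + 1)
              + (core.card + 1) := by ring
        have := hidxlt v
        omega
      calc ((n + 1 - HG.deg E v) * ((HG.verts E).card + 2) + σ v) * (core.card + 1) + idx v
          < ((n + 1 - HG.deg E v) * ((HG.verts E).card + 2) + σ v + 1) * (core.card + 1) := step1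
        _ ≤ ((n + 1 - HG.deg E v) * ((HG.verts E).card + 2) + σ u) * (core.card + 1) :=
            Nat.mul_le_mul_right _ (by omega)
        _ ≤ _ := Nat.le_add_right _ _
    have hρinj : ∀ u ∈ core, ∀ v ∈ core, ρ u = ρ v → u = v := by
      intro u hu v hv h
      simp only [hρ] at h
      have h1 : idx u = idx v := by
        have hiu := hidxlt u
        have hiv := hidxlt v
        have h2 : (((n + 1 - HG.deg E u) * ((HG.verts E).card + 2) + σ u) * (core.card + 1)
            + idx u) % (core.card + 1)
            = (((n + 1 - HG.deg E v) * ((HG.verts E).card + 2) + σ v) * (core.card + 1)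
            + idx v) % (core.card + 1) := by rw [h]
        rwa [Nat.mul_add_mod', Nat.mul_add_mod', Nat.mod_eq_of_lt hiu,
          Nat.mod_eq_of_lt hiv] at h2
      exact hidxinj u hu v hv h1
    -- Good vertices and greedy bound
    set Good := core.filter (fun v => ¬ Bd n E v) with hGood
    have hbound : ∀ v ∈ Good, (Good.filter (fun u => ρ u < ρ v ∧ (gph E).Adj v u)).card < n := by
      intro v hv
      rw [hGood, Finset.mem_filter] at hv
      have hv2 : 2 ≤ HG.deg E v := ((hcoremem v).mp hv.1).2
      have hnbd : ¬ Bd n E v := hv.2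
      have hsubW : Good.filter (fun u => ρ u < ρ v ∧ (gph E).Adj v u)
          ⊆ (HG.adj E v).filter (fun u => HG.deg E v ≤ HG.deg E u) := by
        intro u hu
        rw [Finset.mem_filter] at hu
        obtain ⟨huG, hρu, hadj⟩ := hu
        refine Finset.mem_filter.mpr ⟨gadj_mem_adj hadj, ?_⟩
        by_contra hcon
        push_neg at hcon
        exact absurd (hρdeg u v hcon) (by omega)
      rcases lt_trichotomy (HG.deg E v * HG.deg E v) n with hlt | heq | hgt
      · exact conflict_lt_of_small hlin hE hwd' rfl hv2 hlt _ hsubW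
      · by_cases hsat : Satur n E v
        · obtain ⟨x, hadjx, hdx, hσx⟩ := sat_good_sigma hlin hE hsat hnbd
          have hσlt : σ v < σ x := by
            simp only [hσ]
            rw [if_pos hsat]
            exact hσx
          have hρvx : ρ v < ρ x := hρsig x v hdx hσlt
          have hsubN : Good.filter (fun u => ρ u < ρ v ∧ (gph E).Adj v u)
              ⊆ ((HG.adj E v).filter (fun z => 2 ≤ HG.deg E z)).erase x := by
            intro u hu
            rw [Finset.mem_filter] at hu
            obtain ⟨huG, hρu, hadj⟩ := hu
            refine Finset.mem_erase.mpr ⟨?_, Finset.mem_filter.mpr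
              ⟨gadj_mem_adj hadj, hadj.2.2.1⟩⟩
            intro hux
            rw [hux] at hρu
            omega
          have hcount := Finset.card_le_card hsubN
          rw [Finset.card_erase_of_mem (Finset.mem_filter.mpr
            ⟨gadj_mem_adj hadjx, hadjx.2.2.1⟩), sat_nbr_card hlin hE hsat] at hcount
          omega
        · exact conflict_lt_of_unsat hlin hE rfl hv2 heq hsat _ hsubW
      · exact conflict_lt_of_big hlin hE rfl hv2 hgt _ hsubW
    -- greedy colouring of good vertices
    set fG : V → Fin n := fun v => greedy n hn Good (fun a b => (gph E).Adj a b) ρ (ρ v)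
      with hfG
    have hfGprop : ∀ u ∈ Good, ∀ w ∈ Good, (gph E).Adj u w → u ≠ w → fG u ≠ fG w := by
      intro u hu w hw hadj hne
      exact greedy_ne n hn Good (fun a b => (gph E).Adj a b) ρ
        (fun a b h => h.symm)
        (fun a ha b hb h => hρinj a (Finset.mem_of_mem_filter a ha) b
          (Finset.mem_of_mem_filter b hb) h)
        hbound u hu w hw hadj hne
    -- colouring of bad components
    set rep : V → V := fun v => ((gph E).connectedComponentMk v).out with hrep
    have hrepreach : ∀ v, (gph E).Reachable (rep v) v := by
      intro v
      exact SimpleGraph.ConnectedComponent.exact (Quot.out_eq _)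
    set gl : V → (V → Fin n) := fun r => if h : Bd n E r
        then (bad_coloring hlin hE hn h).choose else (fun _ => ⟨0, hn⟩) with hgl
    set fB : V → Fin n := fun v => gl (rep v) v with hfB
    have hfBprop : ∀ u w, Bd n E u → Bd n E w → (gph E).Adj u w → fB u ≠ fB w := by
      intro u w hbu hbw hadj
      have hcomp : rep u = rep w := by
        have h0 : (gph E).connectedComponentMk u = (gph E).connectedComponentMk w :=
          SimpleGraph.ConnectedComponent.sound hadj.reachable
        exact congrArg Quot.out h0
      have hbrep : Bd n E (rep u) := bd_closed hbu (hrepreach u).symm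
      have hglr : gl (rep u) = (bad_coloring hlin hE hn hbrep).choose := dif_pos hbrep
      have hspec := (bad_coloring hlin hE hn hbrep).choose_spec
      simp only [hfB]
      rw [← hcomp, hglr]
      exact hspec u w (hrepreach u) ((hrepreach u).trans hadj.reachable) hadj
    -- core colouring
    set fC : V → Fin n := fun v => if Bd n E v then fB v else fG v with hfC
    have hfCprop : ∀ u ∈ core, ∀ w ∈ core, (gph E).Adj u w → fC u ≠ fC w := by
      intro u hu w hw hadj
      by_cases hbu : Bd n E u <;> by_cases hbw : Bd n E w
      · have e1 : fC u = fB u := if_pos hbu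
        have e2 : fC w = fB w := if_pos hbw
        rw [e1, e2]
        exact hfBprop u w hbu hbw hadj
      · exact absurd (bd_adj hbu hadj) hbw
      · exact absurd (bd_adj hbw hadj.symm) hbu
      · have e1 : fC u = fG u := if_neg hbu
        have e2 : fC w = fG w := if_neg hbw
        rw [e1, e2]
        exact hfGprop u (Finset.mem_filter.mpr ⟨hu, hbu⟩) w
          (Finset.mem_filter.mpr ⟨hw, hbw⟩) hadj hadj.ne
    -- extension to degree-one vertices
    have hext : ∀ e ∈ E, ∃ g : V → Fin n,
        (∀ u ∈ e, u ∉ core → ∀ w ∈ e, w ∉ core → u ≠ w → g u ≠ g w) ∧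
        (∀ u ∈ e, u ∉ core → ∀ w ∈ e, w ∈ core → g u ≠ fC w) := by
      intro e he
      have hinjC : Set.InjOn fC (e.filter (fun z => z ∈ core)) := by
        intro u hu w hw heq
        simp only [Finset.coe_filter, Set.mem_setOf_eq] at hu hw
        by_contra hne
        have hadj : (gph E).Adj u w :=
          ⟨hne, ((hcoremem u).mp hu.2).2, ((hcoremem w).mp hw.2).2, e, he, hu.1, hw.1⟩
        exact hfCprop u hu.2 w hw.2 hadj heq
      have husedcard : ((e.filter (fun z => z ∈ core)).image fC).card
          = (e.filter (fun z => z ∈ core)).card := Finset.card_image_of_injOn hinjC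
      have hcards : (e.filter (fun z => ¬ z ∈ core)).card
          = (Finset.univ \ ((e.filter (fun z => z ∈ core)).image fC)).card := by
        have hsplit := Finset.card_filter_add_card_filter_not
          (s := e) (p := fun z => z ∈ core)
        rw [huniform e he] at hsplit
        have hle : ((e.filter (fun z => z ∈ core)).image fC).card ≤ n := by
          calc _ ≤ (Finset.univ : Finset (Fin n)).card := Finset.card_le_univ _
            _ = n := by simp
        rw [Finset.card_sdiff_of_subset (Finset.subset_univ _)]
        have : (Finset.univ : Finset (Fin n)).card = n := by simp
        omega
      set ψ := (Finset.equivFinOfCardEq hcards).trans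
        (Finset.univ \ ((e.filter (fun z => z ∈ core)).image fC)).equivFin.symm with hψ
      set g : V → Fin n := fun u => if h : u ∈ e.filter (fun z => ¬ z ∈ core)
        then (ψ ⟨u, h⟩ : Fin n) else ⟨0, hn⟩ with hgdef
      refine ⟨g, ?_, ?_⟩
      · intro u hue hunc w hwe hwnc hne
        have hu : u ∈ e.filter (fun z => ¬ z ∈ core) := Finset.mem_filter.mpr ⟨hue, hunc⟩
        have hw : w ∈ e.filter (fun z => ¬ z ∈ core) := Finset.mem_filter.mpr ⟨hwe, hwnc⟩
        have e1 : g u = (ψ ⟨u, hu⟩ : Fin n) := dif_pos hu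
        have e2 : g w = (ψ ⟨w, hw⟩ : Fin n) := dif_pos hw
        rw [e1, e2]
        intro hcon
        have h2 : ψ ⟨u, hu⟩ = ψ ⟨w, hw⟩ := Subtype.ext hcon
        have h3 := ψ.injective h2
        exact hne (congrArg Subtype.val h3)
      · intro u hue hunc w hwe hwc
        have hu : u ∈ e.filter (fun z => ¬ z ∈ core) := Finset.mem_filter.mpr ⟨hue, hunc⟩
        have e1 : g u = (ψ ⟨u, hu⟩ : Fin n) := dif_pos hu
        rw [e1]
        have hmem := (ψ ⟨u, hu⟩).2
        rw [Finset.mem_sdiff] at hmem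
        intro hcon
        exact hmem.2 (hcon ▸ Finset.mem_image_of_mem fC (Finset.mem_filter.mpr ⟨hwe, hwc⟩))
    set gAll : Finset V → V → Fin n := fun e => if h : e ∈ E then (hext e h).choose
      else fun _ => ⟨0, hn⟩ with hgAll
    have hgAllspec : ∀ e (he : e ∈ E),
        (∀ u ∈ e, u ∉ core → ∀ w ∈ e, w ∉ core → u ≠ w → gAll e u ≠ gAll e w) ∧
        (∀ u ∈ e, u ∉ core → ∀ w ∈ e, w ∈ core → gAll e u ≠ fC w) := by
      intro e he
      have h0 : gAll e = (hext e he).choose := dif_pos he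
      rw [h0]
      exact (hext e he).choose_spec
    -- the unique edge of a vertex
    set uedge : V → Finset V := fun v => if h : 0 < HG.deg E v
        then (deg_pos_iff.mp h).choose else ∅ with huedgedef
    have huedge : ∀ v, 0 < HG.deg E v → uedge v ∈ E ∧ v ∈ uedge v := by
      intro v h
      simp only [huedgedef]
      rw [dif_pos h]
      exact ⟨(deg_pos_iff.mp h).choose_spec.1, (deg_pos_iff.mp h).choose_spec.2⟩
    have huniq : ∀ v, v ∉ core → ∀ e ∈ E, v ∈ e → uedge v = e := by
      intro v hvc e he hve
      have hdpos : 0 < HG.deg E v := deg_pos_iff.mpr ⟨e, he, hve⟩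
      have hd1 : HG.deg E v = 1 := by
        have : ¬ 2 ≤ HG.deg E v := by
          intro h2
          exact hvc (hcorein v h2)
        omega
      have hcard1 : (E.filter (fun f => v ∈ f)).card = 1 := by
        simpa [HG.deg] using hd1
      obtain ⟨a, ha⟩ := Finset.card_eq_one.mp hcard1
      have h1 : uedge v ∈ E.filter (fun f => v ∈ f) :=
        Finset.mem_filter.mpr ⟨(huedge v hdpos).1, (huedge v hdpos).2⟩
      have h2 : e ∈ E.filter (fun f => v ∈ f) := Finset.mem_filter.mpr ⟨he, hve⟩
      rw [ha, Finset.mem_singleton] at h1 h2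
      rw [h1, h2]
    -- final colouring
    set f : V → Fin n := fun v => if v ∈ core then fC v else gAll (uedge v) v with hfdef
    refine ⟨f, ?_⟩
    intro e he u hu w hw hne
    have hgu : 0 < HG.deg E u := deg_pos_iff.mpr ⟨e, he, hu⟩
    have hgw : 0 < HG.deg E w := deg_pos_iff.mpr ⟨e, he, hw⟩
    by_cases hcu : u ∈ core <;> by_cases hcw : w ∈ core
    · have e1 : f u = fC u := if_pos hcu
      have e2 : f w = fC w := if_pos hcw
      rw [e1, e2]
      exact hfCprop u hcu w hcw
        ⟨hne, ((hcoremem u).mp hcu).2, ((hcoremem w).mp hcw).2, e, he, hu, hw⟩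
    · have e1 : f u = fC u := if_pos hcu
      have e2 : f w = gAll (uedge w) w := if_neg hcw
      rw [e1, e2, huniq w hcw e he hw]
      exact ((hgAllspec e he).2 w hw hcw u hu hcu).symm
    · have e1 : f u = gAll (uedge u) u := if_neg hcu
      have e2 : f w = fC w := if_pos hcw
      rw [e1, e2, huniq u hcu e he hu]
      exact (hgAllspec e he).2 u hu hcu w hw hcw
    · have e1 : f u = gAll (uedge u) u := if_neg hcu
      have e2 : f w = gAll (uedge w) w := if_neg hcw
      rw [e1, e2, huniq u hcu e he hu, huniq w hcw e he hw]
      exact (hgAllspec e he).1 u hu hcu w hw hcw hne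
  · -- n is a lower bound
    rintro mm ⟨f, hf⟩
    have hEne : E.Nonempty := by
      rw [← Finset.card_pos, hE]; exact hn
    obtain ⟨e, he⟩ := hEne
    have hinj : Set.InjOn f e := by
      intro u hu w hw heq
      by_contra hne
      exact hf e he u hu w hw hne heq
    have h1 : e.card = (e.image f).card := (Finset.card_image_of_injOn hinj).symm
    have h2 : (e.image f).card ≤ mm := by
      calc _ ≤ (Finset.univ : Finset (Fin mm)).card := Finset.card_le_univ _
        _ = mm := by simp
    rw [huniform e he] at h1
    omega


theorem stmt12 {V : Type*} [DecidableEq V] (n : ℕ) (hn : 0 < n)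
    (E : Finset (Finset V)) (hlin : HG.Linear E)
    (hE : E.card = n) (huniform : ∀ e ∈ E, e.card = n)
    (hwd : ∀ k : ℕ, 2 ≤ k → (k : ℝ) < Real.sqrt n →
      ((HG.verts E).filter (fun v => HG.deg E v = k)).card ≤ k ^ 2) :
    IsLeast {m : ℕ | ∃ f : V → Fin m, HG.Proper E f} n :=
  stmt12' n hn E hlin hE huniform hwd
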